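/- Suppose for each b ≥ 1 a polynomial P_b ∈ ℝ[t] satisfies ∫_{−1/2}^{1/2} |b√(t+1) − P_b(t)| dt/|t| ≤ 1. Then deg(P_b) → ∞ as b → ∞; equivalently, there is no finite D with deg(P_b) ≤ D for all b ≥ 1. -/

import Mathlib

set_option synthInstance.maxHeartbeats 1000000
set_option maxHeartbeats 1000000

open MeasureTheory Polynomial Filter
open scoped ENNReal NNReal

noncomputable section DegAux

def degμ : Measure ℝ := volume.restrict (Set.Ioc (-(1 : ℝ) / 2) (1 / 2))

instance : Fact (volume (Set.Ioc (-(1 : ℝ) / 2) (1 / 2)) < ⊤) := ⟨measure_Ioc_lt_top⟩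

instance : IsFiniteMeasure degμ := by unfold degμ; infer_instance

theorem mem_degμ {g : ℝ → ℝ} (hg : Continuous g) : MemLp g 1 degμ := by
  obtain ⟨C, hC⟩ := (isCompact_Icc (a := -(1 : ℝ) / 2) (b := 1 / 2)).exists_bound_of_continuousOn
    hg.continuousOn
  exact MemLp.of_bound hg.aestronglyMeasurable C
    ((ae_restrict_iff' measurableSet_Ioc).mpr
      (ae_of_all _ fun t ht => hC t (Set.Ioc_subset_Icc_self ht)))

def degfc (N : ℕ) (c : Fin (N + 1) → ℝ) : ℝ → ℝ := fun t => ∑ k : Fin (N + 1), c k * t ^ (k : ℕ)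

theorem degfc_cont (N : ℕ) (c : Fin (N + 1) → ℝ) : Continuous (degfc N c) :=
  continuous_finset_sum _ fun k _ => continuous_const.mul (continuous_pow _)

theorem degfc_mem (N : ℕ) (c : Fin (N + 1) → ℝ) : MemLp (degfc N c) 1 degμ :=
  mem_degμ (degfc_cont N c)

def degT (N : ℕ) : (Fin (N + 1) → ℝ) →ₗ[ℝ] Lp ℝ 1 degμ where
  toFun c := (degfc_mem N c).toLp _
  map_add' c d := by
    rw [← MemLp.toLp_add]
    exact MemLp.toLp_congr _ _ (ae_of_all _ fun t => by
      simp [degfc, add_mul, Finset.sum_add_distrib])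
  map_smul' a c := by
    rw [RingHom.id_apply, ← MemLp.toLp_const_smul a (degfc_mem N c)]
    exact MemLp.toLp_congr (degfc_mem N (a • c)) ((degfc_mem N c).const_smul a)
      (ae_of_all _ fun t => by simp [degfc, Finset.mul_sum, mul_assoc])

end DegAux

/-- If for each `b ≥ 1` a polynomial `P_b` satisfies
`∫_{−1/2}^{1/2} |b√(t+1) − P_b(t)| dt/|t| ≤ 1`, then `deg P_b → ∞` as `b → ∞`. -/
theorem degree_tendsto_atTop (P : ℝ → Polynomial ℝ)
    (hP : ∀ b : ℝ, 1 ≤ b →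
      (∫⁻ t in Set.Ioc (-(1 : ℝ) / 2) (1 / 2),
        ENNReal.ofReal (|b * Real.sqrt (t + 1) - (P b).eval t| / |t|)) ≤ 1) :
    Tendsto (fun b : ℝ => (P b).natDegree) atTop atTop := by
  by_contra hcon
  rw [Filter.tendsto_atTop] at hcon
  push_neg at hcon
  obtain ⟨N, hN⟩ := hcon
  have hseq : ∀ n : ℕ, ∃ b : ℝ, max (n : ℝ) 1 ≤ b ∧ (P b).natDegree < N := by
    intro n
    obtain ⟨b, hb1, hb2⟩ := Filter.frequently_atTop.mp hN (max (n : ℝ) 1)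
    exact ⟨b, hb1, hb2⟩
  choose b hbge hbdeg using hseq
  have hb1 : ∀ n, (1 : ℝ) ≤ b n := fun n => le_trans (le_max_right _ _) (hbge n)
  have hbpos : ∀ n, (0 : ℝ) < b n := fun n => lt_of_lt_of_le one_pos (hb1 n)
  set f : ℝ → ℝ := fun t => Real.sqrt (t + 1) with hf_def
  have hf_cont : Continuous f := Real.continuous_sqrt.comp (continuous_id.add continuous_const)
  have hf_mem : MemLp f 1 degμ := mem_degμ hf_cont
  set c : ℕ → Fin (N + 1) → ℝ := fun n k => (b n)⁻¹ * (P (b n)).coeff k with hc_def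
  have hfc_eq : ∀ n t, degfc N (c n) t = (b n)⁻¹ * (P (b n)).eval t := by
    intro n t
    rw [Polynomial.eval_eq_sum_range' (Nat.lt_succ_of_lt (hbdeg n)) t, Finset.mul_sum,
      ← Fin.sum_univ_eq_sum_range (fun k => (b n)⁻¹ * ((P (b n)).coeff k * t ^ k)) (N + 1)]
    simp only [degfc, hc_def, mul_assoc]
  -- key eLpNorm bound
  have hkey : ∀ n, eLpNorm (f - degfc N (c n)) 1 degμ ≤ ENNReal.ofReal ((2 * b n)⁻¹) := by
    intro n
    have hP' := hP (b n) (hb1 n)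
    have hmem : ∀ᵐ t ∂degμ, t ∈ Set.Ioc (-(1 : ℝ) / 2) (1 / 2) :=
      ae_restrict_mem measurableSet_Ioc
    have hne : ∀ᵐ t ∂degμ, t ≠ (0 : ℝ) := by
      rw [ae_iff]
      simp only [ne_eq, not_not, Set.setOf_eq_eq_singleton]
      rw [degμ, Measure.restrict_apply (measurableSet_singleton 0)]
      exact measure_mono_null Set.inter_subset_left (by simp)
    have hae : ∀ᵐ t ∂degμ, (‖(f - degfc N (c n)) t‖₊ : ℝ≥0∞) ≤
        ENNReal.ofReal (|b n * Real.sqrt (t + 1) - (P (b n)).eval t| / |t|) *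
          ENNReal.ofReal ((2 * b n)⁻¹) := by
      filter_upwards [hmem, hne] with t ht ht0
      set X := b n * Real.sqrt (t + 1) - (P (b n)).eval t with hX
      have habs : |t| ≤ 1 / 2 := abs_le.mpr ⟨by linarith [ht.1], ht.2⟩
      have htpos : 0 < |t| := abs_pos.mpr ht0
      have hdiff : (f - degfc N (c n)) t = (b n)⁻¹ * X := by
        simp only [Pi.sub_apply, hfc_eq n t]
        rw [hX, mul_sub, inv_mul_cancel_left₀ (hbpos n).ne']
      have key : (b n)⁻¹ * |X| ≤ |X| / |t| * (2 * b n)⁻¹ := by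
        have h1 : |X| / |t| * (2 * b n)⁻¹ = |X| / (|t| * (2 * b n)) := by
          rw [← div_eq_mul_inv, div_div]
        rw [inv_mul_eq_div, h1]
        gcongr
        · exact mul_pos htpos (by linarith [hbpos n])
        · nlinarith [hbpos n]
      calc (‖(f - degfc N (c n)) t‖₊ : ℝ≥0∞)
          = ENNReal.ofReal ((b n)⁻¹ * |X|) := by
            rw [← enorm_eq_nnnorm, ← ofReal_norm, Real.norm_eq_abs, hdiff, abs_mul, abs_inv,
              abs_of_pos (hbpos n)]
        _ ≤ ENNReal.ofReal (|X| / |t| * (2 * b n)⁻¹) := ENNReal.ofReal_le_ofReal key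
        _ = _ := ENNReal.ofReal_mul (by positivity)
    rw [eLpNorm_one_eq_lintegral_enorm]
    calc ∫⁻ t, ‖(f - degfc N (c n)) t‖₊ ∂degμ
        ≤ ∫⁻ t, ENNReal.ofReal (|b n * Real.sqrt (t + 1) - (P (b n)).eval t| / |t|) *
            ENNReal.ofReal ((2 * b n)⁻¹) ∂degμ := lintegral_mono_ae hae
      _ = (∫⁻ t, ENNReal.ofReal (|b n * Real.sqrt (t + 1) - (P (b n)).eval t| / |t|) ∂degμ) *
            ENNReal.ofReal ((2 * b n)⁻¹) := lintegral_mul_const' _ _ ENNReal.ofReal_ne_top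
      _ ≤ 1 * ENNReal.ofReal ((2 * b n)⁻¹) := mul_le_mul_left hP' _
      _ = _ := one_mul _
  -- convergence in L¹
  have hnorm : ∀ n, ‖degT N (c n) - hf_mem.toLp f‖ ≤ (2 * b n)⁻¹ := by
    intro n
    have e : degT N (c n) - hf_mem.toLp f = ((degfc_mem N (c n)).sub hf_mem).toLp _ :=
      (MemLp.toLp_sub (degfc_mem N (c n)) hf_mem).symm
    rw [e, MeasureTheory.Lp.norm_toLp (degfc N (c n) - f) ((degfc_mem N (c n)).sub hf_mem),
      eLpNorm_sub_comm]
    exact ENNReal.toReal_le_of_le_ofReal (inv_nonneg.mpr (by linarith [hbpos n])) (hkey n)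
  have hbtop : Tendsto b atTop atTop :=
    tendsto_atTop_mono (fun n => le_trans (le_max_left _ _) (hbge n)) tendsto_natCast_atTop_atTop
  have hinv : Tendsto (fun n => (2 * b n)⁻¹) atTop (nhds 0) :=
    (hbtop.const_mul_atTop two_pos).inv_tendsto_atTop
  have htend : Tendsto (fun n => degT N (c n)) atTop (nhds (hf_mem.toLp f)) := by
    rw [tendsto_iff_norm_sub_tendsto_zero]
    exact squeeze_zero (fun n => norm_nonneg _) hnorm hinv
  have hmemS : hf_mem.toLp f ∈ LinearMap.range (degT N) := by
    have hclosed : IsClosed ((LinearMap.range (degT N)) : Set (Lp ℝ 1 degμ)) :=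
      Submodule.closed_of_finiteDimensional _
    exact hclosed.mem_of_tendsto htend (Filter.Eventually.of_forall fun n => ⟨c n, rfl⟩)
  obtain ⟨c₀, hc₀⟩ := hmemS
  have haeeq : degfc N c₀ =ᵐ[degμ] f := by
    have e2 := MemLp.coeFn_toLp (degfc_mem N c₀)
    have e3 : ⇑((degfc_mem N c₀).toLp _) =ᵐ[degμ] f := by
      rw [show (degfc_mem N c₀).toLp (degfc N c₀) = hf_mem.toLp f from hc₀]
      exact MemLp.coeFn_toLp hf_mem
    exact e2.symm.trans e3
  -- equality on the open interval
  have hEqOn : ∀ t ∈ Set.Ioo (-(1 : ℝ) / 2) (1 / 2), degfc N c₀ t = f t := by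
    by_contra hcontra
    push_neg at hcontra
    obtain ⟨t₀, ht₀, hne0⟩ := hcontra
    set U := Set.Ioo (-(1 : ℝ) / 2) (1 / 2) ∩ (fun t => degfc N c₀ t - f t) ⁻¹' {(0 : ℝ)}ᶜ with hU
    have hUopen : IsOpen U :=
      isOpen_Ioo.inter (isOpen_compl_singleton.preimage ((degfc_cont N c₀).sub hf_cont))
    have hUne : U.Nonempty := by
      refine ⟨t₀, ?_⟩
      rw [hU]
      refine Set.mem_inter ht₀ ?_
      simp only [Set.mem_preimage, Set.mem_compl_iff, Set.mem_singleton_iff]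
      exact sub_ne_zero.mpr hne0
    have hnull : degμ {t | ¬ degfc N c₀ t = f t} = 0 := by
      rw [EventuallyEq, ae_iff] at haeeq
      exact haeeq
    have hnull2 : volume ({t | ¬ degfc N c₀ t = f t} ∩ Set.Ioc (-(1 : ℝ) / 2) (1 / 2)) = 0 := by
      rw [← Measure.restrict_apply' measurableSet_Ioc]
      exact hnull
    have hU0 : volume U = 0 := by
      refine measure_mono_null (fun x hx => ?_) hnull2
      rw [hU] at hx
      exact Set.mem_inter (sub_ne_zero.mp hx.2) (Set.Ioo_subset_Ioc_self hx.1)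
    exact absurd hU0 (hUopen.measure_pos volume hUne).ne'
  -- derive the polynomial identity
  set R : Polynomial ℝ := ∑ k : Fin (N + 1), Polynomial.C (c₀ k) * Polynomial.X ^ (k : ℕ)
    with hR
  have hReval : ∀ t : ℝ, R.eval t = degfc N c₀ t := by
    intro t
    simp [hR, degfc, Polynomial.eval_finset_sum]
  have hsq : Set.Ioo (-(1 : ℝ) / 2) (1 / 2) ⊆
      {x : ℝ | (R ^ 2).eval x = ((Polynomial.X + Polynomial.C 1 : Polynomial ℝ)).eval x} := by
    intro t ht
    have h1 : R.eval t = Real.sqrt (t + 1) := (hReval t).trans (hEqOn t ht)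
    simp only [Set.mem_setOf_eq, Polynomial.eval_pow, Polynomial.eval_add, Polynomial.eval_X,
      Polynomial.eval_C, h1]
    exact Real.sq_sqrt (by linarith [ht.1])
  have hpoly : R ^ 2 = (Polynomial.X + Polynomial.C 1 : Polynomial ℝ) :=
    Polynomial.eq_of_infinite_eval_eq _ _ ((Set.Ioo_infinite (by norm_num)).mono hsq)
  have hdeg2 : 2 * R.natDegree = 1 := by
    have := congrArg Polynomial.natDegree hpoly
    rwa [Polynomial.natDegree_pow, Polynomial.natDegree_X_add_C] at this
  omega
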